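/- arXiv:2108.09517 — 5 statements merged into one kernel-verified Lean document; each statement's English description precedes it below -/
import Mathlib

section
/- Let 𝒜 be a commutative unital complex semisimple Banach algebra with maximal ideal space M_𝒜, and let A ∈ 𝒜^{n×n}, B ∈ 𝒜^{m×m} be such that for all φ ∈ M_𝒜, σ(Â(φ)) ∩ σ(B̂(φ)) = ∅. Then for every C ∈ 𝒜^{n×m} there exists a unique X ∈ 𝒜^{n×m} with AX − XB = C. -/
open WeakDual Polynomial Matrix

section Aux

variable {n m : ℕ}

/-- The Sylvester matrix of the map `X ↦ A * X - X * B`. -/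
def sylMat {R : Type*} [CommRing R] (A : Matrix (Fin n) (Fin n) R)
    (B : Matrix (Fin m) (Fin m) R) : Matrix (Fin n × Fin m) (Fin n × Fin m) R :=
  fun p q => A p.1 q.1 * (if p.2 = q.2 then 1 else 0) - (if p.1 = q.1 then 1 else 0) * B q.2 p.2

lemma sylMat_mulVec {R : Type*} [CommRing R] (A : Matrix (Fin n) (Fin n) R)
    (B : Matrix (Fin m) (Fin m) R) (X : Matrix (Fin n) (Fin m) R) (p : Fin n × Fin m) :
    (sylMat A B).mulVec (fun q => X q.1 q.2) p = (A * X - X * B) p.1 p.2 := by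
  obtain ⟨i, j⟩ := p
  simp only [mulVec, dotProduct, sylMat, Fintype.sum_prod_type, sub_mul, ite_mul, one_mul,
    zero_mul, mul_ite, mul_zero, Finset.sum_sub_distrib, Matrix.sub_apply, Matrix.mul_apply]
  congr 1
  · rw [Finset.sum_comm]
    simp [Finset.sum_ite_eq, eq_comm]
  · simp [Finset.sum_ite_eq, mul_comm, eq_comm]

lemma sylMat_map {R S : Type*} [CommRing R] [CommRing S] (f : R →+* S)
    (A : Matrix (Fin n) (Fin n) R) (B : Matrix (Fin m) (Fin m) R) :
    (sylMat A B).map f = sylMat (A.map f) (B.map f) := by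
  ext p q
  simp [sylMat, Matrix.map_apply, apply_ite f]

lemma mem_spectrum_iff_charpoly {N : ℕ} (M : Matrix (Fin N) (Fin N) ℂ) (μ : ℂ) :
    μ ∈ spectrum ℂ M ↔ M.charpoly.eval μ = 0 := by
  have hmap : (charmatrix M).map (evalRingHom μ) = algebraMap ℂ _ μ - M := by
    ext i j
    by_cases h : i = j <;>
      simp [charmatrix_apply, h, Matrix.algebraMap_matrix_apply, Matrix.sub_apply,
        Matrix.diagonal_apply]
  have hdet : M.charpoly.eval μ = (algebraMap ℂ (Matrix (Fin N) (Fin N) ℂ) μ - M).det := by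
    have h2 := RingHom.map_det (evalRingHom μ) (charmatrix M)
    rw [RingHom.mapMatrix_apply, hmap] at h2
    rw [Matrix.charpoly, ← h2]
    simp
  rw [spectrum.mem_iff, hdet]
  constructor
  · intro hnu
    by_contra hne
    exact hnu ((Matrix.isUnit_iff_isUnit_det _).2 (isUnit_iff_ne_zero.2 hne))
  · intro h0 hu
    exact absurd ((Matrix.isUnit_iff_isUnit_det _).1 hu) (by simp [h0])

/-- Sylvester's theorem over ℂ : injectivity. -/
lemma sylvester_complex_inj (A : Matrix (Fin n) (Fin n) ℂ) (B : Matrix (Fin m) (Fin m) ℂ)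
    (h : spectrum ℂ A ∩ spectrum ℂ B = ∅)
    (X : Matrix (Fin n) (Fin m) ℂ) (hX : A * X = X * B) : X = 0 := by
  rcases Nat.eq_zero_or_pos m with hm | hm
  · ext i j; exact absurd j.isLt (by omega)
  set p := B.charpoly with hp
  have hpow : ∀ k : ℕ, A ^ k * X = X * B ^ k := by
    intro k
    induction k with
    | zero => simp
    | succ k ih =>
      rw [pow_succ, pow_succ, Matrix.mul_assoc, hX, ← Matrix.mul_assoc, ih, Matrix.mul_assoc]
  have key : ∀ q : ℂ[X], (aeval A q) * X = X * (aeval B q) := by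
    intro q
    induction q using Polynomial.induction_on' with
    | add f g hf hg => rw [map_add, map_add, Matrix.add_mul, Matrix.mul_add, hf, hg]
    | monomial k c =>
      rw [aeval_monomial, aeval_monomial, Algebra.algebraMap_eq_smul_one,
        Algebra.algebraMap_eq_smul_one, smul_one_mul, smul_one_mul, Matrix.smul_mul,
        Matrix.mul_smul, hpow]
  have key0 : (aeval A p) * X = 0 := by
    rw [key p, hp, Matrix.aeval_self_charpoly, Matrix.mul_zero]
  have hdeg : 0 < p.degree := by
    rw [← Polynomial.natDegree_pos_iff_degree_pos, hp, Matrix.charpoly_natDegree_eq_dim]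
    simpa using hm
  have hunit : IsUnit (aeval A p) := by
    rw [← spectrum.zero_notMem_iff ℂ, spectrum.map_polynomial_aeval_of_degree_pos A p hdeg]
    rintro ⟨μ, hμ, hev⟩
    have hμB : μ ∈ spectrum ℂ B := (mem_spectrum_iff_charpoly B μ).2 hev
    exact Set.eq_empty_iff_forall_notMem.1 h μ ⟨hμ, hμB⟩
  obtain ⟨u, hu⟩ := hunit
  have hinv : (↑u⁻¹ : Matrix (Fin n) (Fin n) ℂ) * (↑u : Matrix (Fin n) (Fin n) ℂ) = 1 :=
    u.inv_mul
  calc X = ((↑u⁻¹ : Matrix (Fin n) (Fin n) ℂ) * (↑u : Matrix (Fin n) (Fin n) ℂ)) * X := by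
        rw [hinv, Matrix.one_mul]
    _ = (↑u⁻¹ : Matrix (Fin n) (Fin n) ℂ) * ((↑u : Matrix (Fin n) (Fin n) ℂ) * X) :=
        Matrix.mul_assoc _ _ _
    _ = (0 : Matrix (Fin n) (Fin m) ℂ) := by rw [hu, key0, Matrix.mul_zero]

end Aux

theorem sylvester_banach_algebra (n m : ℕ)
    {𝒜 : Type*} [NormedCommRing 𝒜] [NormedAlgebra ℂ 𝒜] [CompleteSpace 𝒜] [Nontrivial 𝒜]
    (hss : ∀ a : 𝒜, (∀ φ : characterSpace ℂ 𝒜, φ a = 0) → a = 0)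
    (A : Matrix (Fin n) (Fin n) 𝒜) (B : Matrix (Fin m) (Fin m) 𝒜)
    (h : ∀ φ : characterSpace ℂ 𝒜,
      spectrum ℂ (A.map φ) ∩ spectrum ℂ (B.map φ) = ∅) :
    ∀ C : Matrix (Fin n) (Fin m) 𝒜, ∃! X : Matrix (Fin n) (Fin m) 𝒜, A * X - X * B = C := by
  intro C
  classical
  set S := sylMat A B with hSdef
  have hdet : IsUnit S.det := by
    by_contra hd
    obtain ⟨φ, hφ⟩ := WeakDual.CharacterSpace.exists_apply_eq_zero hd
    have hcoe : (⇑(φ : 𝒜 →+* ℂ) : 𝒜 → ℂ) = ⇑φ := rfl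
    have h1 : (sylMat (A.map (φ : 𝒜 →+* ℂ)) (B.map (φ : 𝒜 →+* ℂ))).det = 0 := by
      have h2 := RingHom.map_det (φ : 𝒜 →+* ℂ) (sylMat A B)
      rw [RingHom.mapMatrix_apply, sylMat_map] at h2
      rw [← h2]
      exact hφ
    rw [hcoe] at h1
    obtain ⟨v, hv0, hv⟩ := Matrix.exists_mulVec_eq_zero_iff.mpr h1
    set X : Matrix (Fin n) (Fin m) ℂ := fun k l => v (k, l) with hXdef
    have hfun : (fun q : Fin n × Fin m => X q.1 q.2) = v := by
      funext q; rfl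
    have hsub : (A.map φ) * X - X * (B.map φ) = 0 := by
      ext i j
      have := sylMat_mulVec (A.map φ) (B.map φ) X (i, j)
      rw [hfun, hv] at this
      simpa using this.symm
    have hXz : X = 0 := sylvester_complex_inj _ _ (h φ) X (by rwa [sub_eq_zero] at hsub)
    exact hv0 (funext fun q => congrFun (congrFun hXz q.1) q.2)
  have h1 : S * S⁻¹ = 1 := Matrix.mul_nonsing_inv S hdet
  have h2 : S⁻¹ * S = 1 := Matrix.nonsing_inv_mul S hdet
  set x : Fin n × Fin m → 𝒜 := S⁻¹.mulVec (fun q => C q.1 q.2) with hxdef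
  refine ⟨fun k l => x (k, l), ?_, ?_⟩
  · ext i j
    have hfun : (fun q : Fin n × Fin m => x (q.1, q.2)) = x := by
      funext q; rfl
    have := sylMat_mulVec A B (fun k l => x (k, l)) (i, j)
    rw [hfun, hxdef, Matrix.mulVec_mulVec, h1, Matrix.one_mulVec] at this
    exact this.symm
  · intro Y hY
    have hv : S.mulVec (fun q => Y q.1 q.2) = fun q => C q.1 q.2 := by
      funext q
      have := sylMat_mulVec A B Y (q.1, q.2)
      rw [hY] at this
      simpa using this
    have hYx : (fun q : Fin n × Fin m => Y q.1 q.2) = x := by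
      have := congrArg (fun w => S⁻¹.mulVec w) hv
      simpa [Matrix.mulVec_mulVec, h2, Matrix.one_mulVec, hxdef] using this
    ext k l
    exact congrFun hYx (k, l)
end

section
/- Let 𝒜 be a commutative unital complex semisimple Banach algebra, A ∈ 𝒜^{n×n}, B ∈ 𝒜^{m×m}, and suppose that for every C ∈ 𝒜^{n×m} the block matrices [[A, 0],[0, B]] and [[A, C],[0, B]] are similar in 𝒜^{(n+m)×(n+m)}. Then for every φ ∈ M_𝒜, σ(Â(φ)) ∩ σ(B̂(φ)) = ∅. -/
open WeakDual Matrix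

private lemma fromBlocks_sub' {n m : ℕ} {α : Type*} [Ring α]
    (a a' : Matrix (Fin n) (Fin n) α) (b b' : Matrix (Fin n) (Fin m) α)
    (c c' : Matrix (Fin m) (Fin n) α) (d d' : Matrix (Fin m) (Fin m) α) :
    Matrix.fromBlocks a b c d - Matrix.fromBlocks a' b' c' d' =
      Matrix.fromBlocks (a - a') (b - b') (c - c') (d - d') := by
  ext (i|i) (j|j) <;> simp

private lemma isConj_algebraMap_sub {S : Type*} [Ring S] [Algebra ℂ S]
    {a b : S} (lam : ℂ) (h : IsConj a b) :
    IsConj (algebraMap ℂ S lam - a) (algebraMap ℂ S lam - b) := by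
  obtain ⟨c, hc⟩ := h
  refine ⟨c, ?_⟩
  unfold SemiconjBy at hc ⊢
  rw [mul_sub, sub_mul, hc, Algebra.commutes]

/-- Key linear algebra lemma over ℂ: if `A₀` and `B₀` are both singular, then not all
block matrices `[[A₀, C],[0,B₀]]` are conjugate to `[[A₀,0],[0,B₀]]`. -/
private lemma key_singular (n m : ℕ) (A₀ : Matrix (Fin n) (Fin n) ℂ) (B₀ : Matrix (Fin m) (Fin m) ℂ)
    (hA : ¬ IsUnit A₀) (hB : ¬ IsUnit B₀)
    (h : ∀ C : Matrix (Fin n) (Fin m) ℂ,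
      IsConj (Matrix.fromBlocks A₀ 0 0 B₀) (Matrix.fromBlocks A₀ C 0 B₀)) : False := by
  classical
  have hdetA : A₀.det = 0 := by
    by_contra hd
    exact hA ((Matrix.isUnit_iff_isUnit_det A₀).2 (isUnit_iff_ne_zero.2 hd))
  have hdetB : B₀.det = 0 := by
    by_contra hd
    exact hB ((Matrix.isUnit_iff_isUnit_det B₀).2 (isUnit_iff_ne_zero.2 hd))
  obtain ⟨v, hv0, hv⟩ := Matrix.exists_mulVec_eq_zero_iff.2 hdetA
  obtain ⟨y₀, hy0, hy⟩ := Matrix.exists_mulVec_eq_zero_iff.2 hdetB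
  -- A₀ is not injective, hence not surjective
  have hnotinj : ¬ Function.Injective A₀.mulVecLin := by
    intro hinj
    exact hv0 (hinj (show A₀.mulVecLin v = A₀.mulVecLin 0 by simpa using hv))
  have hnotsurj : ¬ Function.Surjective A₀.mulVecLin := fun hs =>
    hnotinj (LinearMap.injective_iff_surjective.2 hs)
  obtain ⟨u, hu⟩ : ∃ u : Fin n → ℂ, ∀ x, A₀.mulVec x ≠ u := by
    simp only [Function.Surjective, not_forall, not_exists] at hnotsurj
    obtain ⟨u, hu⟩ := hnotsurj
    exact ⟨u, fun x => hu x⟩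
  have hune : u ≠ 0 := fun h0 => hu 0 (by simp [h0])
  obtain ⟨i, hi⟩ : ∃ i, y₀ i ≠ 0 := by
    by_contra hc; push_neg at hc; exact hy0 (funext hc)
  obtain ⟨w, hwy⟩ : ∃ w : Fin m → ℂ, w ⬝ᵥ y₀ = 1 :=
    ⟨Pi.single i (y₀ i)⁻¹, by rw [single_dotProduct]; exact inv_mul_cancel₀ hi⟩
  set C := Matrix.vecMulVec u w with hC
  have hCmul : ∀ y : Fin m → ℂ, C.mulVec y = (w ⬝ᵥ y) • u := by
    intro y
    funext a
    simp only [hC, Matrix.mulVec, dotProduct, Matrix.vecMulVec_apply, Pi.smul_apply,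
      smul_eq_mul]
    rw [Finset.sum_mul]
    exact Finset.sum_congr rfl fun b _ => by ring
  set N := Matrix.fromBlocks A₀ 0 0 B₀ with hN
  set M := Matrix.fromBlocks A₀ C 0 B₀ with hM
  obtain ⟨U, hU⟩ := h C
  have h1 : (U : Matrix (Fin n ⊕ Fin m) (Fin n ⊕ Fin m) ℂ) * N =
      M * (U : Matrix (Fin n ⊕ Fin m) (Fin n ⊕ Fin m) ℂ) := hU
  have hMN : M = (U : Matrix (Fin n ⊕ Fin m) (Fin n ⊕ Fin m) ℂ) * N *
      ((U⁻¹ : (Matrix (Fin n ⊕ Fin m) (Fin n ⊕ Fin m) ℂ)ˣ) : Matrix (Fin n ⊕ Fin m) (Fin n ⊕ Fin m) ℂ) := by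
    rw [h1, mul_assoc, U.mul_inv, mul_one]
  let e : ((Fin n ⊕ Fin m) → ℂ) ≃ₗ[ℂ] ((Fin n ⊕ Fin m) → ℂ) :=
    LinearEquiv.ofLinear (Matrix.toLin' (U : Matrix (Fin n ⊕ Fin m) (Fin n ⊕ Fin m) ℂ))
      (Matrix.toLin' (↑(U⁻¹) : Matrix (Fin n ⊕ Fin m) (Fin n ⊕ Fin m) ℂ))
      (by rw [← Matrix.toLin'_mul, U.mul_inv, Matrix.toLin'_one])
      (by rw [← Matrix.toLin'_mul, U.inv_mul, Matrix.toLin'_one])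
  have hcomp : ∀ x, Matrix.toLin' M x = e (Matrix.toLin' N (e.symm x)) := by
    intro x
    rw [hMN, Matrix.toLin'_mul, Matrix.toLin'_mul]
    rfl
  have hkerM : LinearMap.ker (Matrix.toLin' M) =
      (LinearMap.ker (Matrix.toLin' N)).map (e : (_ → ℂ) →ₗ[ℂ] (_ → ℂ)) := by
    ext x
    rw [Submodule.mem_map_equiv]
    simp only [LinearMap.mem_ker, hcomp x]
    rw [e.map_eq_zero_iff]
  have hfr : Module.finrank ℂ (LinearMap.ker (Matrix.toLin' M)) =
      Module.finrank ℂ (LinearMap.ker (Matrix.toLin' N)) := by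
    rw [hkerM]
    exact e.finrank_map_eq _
  -- but the kernel of M is strictly smaller than that of N
  have hle : LinearMap.ker (Matrix.toLin' M) ≤ LinearMap.ker (Matrix.toLin' N) := by
    intro x hx
    rw [LinearMap.mem_ker, Matrix.toLin'_apply, hM, Matrix.fromBlocks_mulVec] at hx
    have h1 : A₀ *ᵥ (x ∘ Sum.inl) + C *ᵥ (x ∘ Sum.inr) = 0 := by
      funext a
      simpa using congrFun hx (Sum.inl a)
    have h2 : B₀ *ᵥ (x ∘ Sum.inr) = 0 := by
      funext a
      simpa using congrFun hx (Sum.inr a)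
    have hw0 : w ⬝ᵥ (x ∘ Sum.inr) = 0 := by
      by_contra hne
      apply hu ((-(w ⬝ᵥ (x ∘ Sum.inr))⁻¹) • (x ∘ Sum.inl))
      rw [Matrix.mulVec_smul]
      have hAx : A₀ *ᵥ (x ∘ Sum.inl) = -((w ⬝ᵥ (x ∘ Sum.inr)) • u) := by
        rw [eq_neg_iff_add_eq_zero, ← hCmul _]
        exact h1
      rw [hAx, smul_neg, smul_smul, neg_mul, neg_smul, neg_neg, inv_mul_cancel₀ hne, one_smul]
    have h1' : A₀ *ᵥ (x ∘ Sum.inl) = 0 := by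
      rw [hCmul, hw0, zero_smul, add_zero] at h1
      exact h1
    rw [LinearMap.mem_ker, Matrix.toLin'_apply, hN, Matrix.fromBlocks_mulVec]
    funext a
    cases a with
    | inl a => simp [h1']
    | inr a => simp [h2]
  have hmem : (Sum.elim 0 y₀ : (Fin n ⊕ Fin m) → ℂ) ∈ LinearMap.ker (Matrix.toLin' N) := by
    rw [LinearMap.mem_ker, Matrix.toLin'_apply, hN, Matrix.fromBlocks_mulVec]
    funext a
    cases a with
    | inl a => simp [Sum.elim_comp_inl]
    | inr a => simp [Sum.elim_comp_inr, hy]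
  have hnmem : (Sum.elim 0 y₀ : (Fin n ⊕ Fin m) → ℂ) ∉ LinearMap.ker (Matrix.toLin' M) := by
    rw [LinearMap.mem_ker, Matrix.toLin'_apply, hM, Matrix.fromBlocks_mulVec]
    intro hx
    have h1 : A₀ *ᵥ ((Sum.elim 0 y₀ : (Fin n ⊕ Fin m) → ℂ) ∘ Sum.inl)
        + C *ᵥ ((Sum.elim 0 y₀ : (Fin n ⊕ Fin m) → ℂ) ∘ Sum.inr) = 0 := by
      funext a
      simpa using congrFun hx (Sum.inl a)
    rw [Sum.elim_comp_inl, Sum.elim_comp_inr, Matrix.mulVec_zero, zero_add, hCmul, hwy,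
      one_smul] at h1
    exact hune h1
  have hlt : LinearMap.ker (Matrix.toLin' M) < LinearMap.ker (Matrix.toLin' N) :=
    lt_of_le_of_ne hle (fun heq => hnmem (heq ▸ hmem))
  have := Submodule.finrank_lt_finrank_of_lt hlt
  omega

theorem disjoint_pointwise_spectra_of_similar (n m : ℕ)
    {𝒜 : Type*} [NormedCommRing 𝒜] [NormedAlgebra ℂ 𝒜] [CompleteSpace 𝒜] [Nontrivial 𝒜]
    (hss : ∀ a : 𝒜, (∀ φ : characterSpace ℂ 𝒜, φ a = 0) → a = 0)
    (A : Matrix (Fin n) (Fin n) 𝒜) (B : Matrix (Fin m) (Fin m) 𝒜)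
    (h : ∀ C : Matrix (Fin n) (Fin m) 𝒜,
      IsConj (Matrix.fromBlocks A 0 0 B) (Matrix.fromBlocks A C 0 B)) :
    ∀ φ : characterSpace ℂ 𝒜, spectrum ℂ (A.map φ) ∩ spectrum ℂ (B.map φ) = ∅ := by
  classical
  intro φ
  by_contra hne
  obtain ⟨lam, hlamA, hlamB⟩ := Set.nonempty_iff_ne_empty.2 hne
  set ψ : 𝒜 →ₐ[ℂ] ℂ := AlgHomClass.toAlgHom φ with hψ
  have hcoe : ⇑ψ = ⇑φ := rfl
  set ρ : Matrix (Fin n ⊕ Fin m) (Fin n ⊕ Fin m) 𝒜 →+* Matrix (Fin n ⊕ Fin m) (Fin n ⊕ Fin m) ℂ :=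
    ψ.toRingHom.mapMatrix with hρ
  -- transfer the conjugacy hypothesis to ℂ
  have hconj : ∀ C' : Matrix (Fin n) (Fin m) ℂ,
      IsConj (Matrix.fromBlocks (A.map ⇑φ) 0 0 (B.map ⇑φ))
        (Matrix.fromBlocks (A.map ⇑φ) C' 0 (B.map ⇑φ)) := by
    intro C'
    have hmap := ρ.toMonoidHom.map_isConj (h (C'.map (algebraMap ℂ 𝒜)))
    have hCC : C'.map (⇑φ ∘ ⇑(algebraMap ℂ 𝒜)) = C' := by
      ext a b
      have h2 : φ (algebraMap ℂ 𝒜 (C' a b)) = C' a b := ψ.commutes _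
      simpa [Matrix.map_apply] using h2
    simpa [hρ, RingHom.mapMatrix_apply, Matrix.fromBlocks_map, hcoe, hCC,
      Matrix.map_zero] using hmap
  -- shift by lam
  set A₀ := algebraMap ℂ (Matrix (Fin n) (Fin n) ℂ) lam - A.map ⇑φ with hA₀
  set B₀ := algebraMap ℂ (Matrix (Fin m) (Fin m) ℂ) lam - B.map ⇑φ with hB₀
  have hAnu : ¬ IsUnit A₀ := spectrum.mem_iff.1 hlamA
  have hBnu : ¬ IsUnit B₀ := spectrum.mem_iff.1 hlamB
  refine key_singular n m A₀ B₀ hAnu hBnu ?_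
  intro C
  have := isConj_algebraMap_sub (S := Matrix (Fin n ⊕ Fin m) (Fin n ⊕ Fin m) ℂ) lam (hconj (-C))
  have hscal : algebraMap ℂ (Matrix (Fin n ⊕ Fin m) (Fin n ⊕ Fin m) ℂ) lam =
      Matrix.fromBlocks (algebraMap ℂ (Matrix (Fin n) (Fin n) ℂ) lam) 0 0
        (algebraMap ℂ (Matrix (Fin m) (Fin m) ℂ) lam) := by
    rw [Algebra.algebraMap_eq_smul_one, Algebra.algebraMap_eq_smul_one,
      Algebra.algebraMap_eq_smul_one, ← Matrix.fromBlocks_one, Matrix.fromBlocks_smul,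
      smul_zero, smul_zero]
  rw [hscal, fromBlocks_sub', fromBlocks_sub'] at this
  simpa [hA₀, hB₀] using this
end

section
/- Let 𝒜 be a commutative unital complex semisimple Banach algebra, A ∈ 𝒜^{n×n}, B ∈ 𝒜^{m×m}. The following are equivalent: (1) for every C ∈ 𝒜^{n×m} the matrices [[A,0],[0,B]] and [[A,C],[0,B]] are similar over 𝒜; (2) for every C ∈ 𝒜^{n×m} there is a unique X ∈ 𝒜^{n×m} with AX − XB = C; (3) for all φ ∈ M_𝒜, σ(Â(φ)) ∩ σ(B̂(φ)) = ∅. -/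
open WeakDual Matrix

set_option linter.unusedSectionVars false
namespace RothAux

variable {R S : Type*} [CommRing R] [CommRing S]
variable {p q : Type*} [Fintype p] [Fintype q] [DecidableEq p] [DecidableEq q]

/-- The Sylvester matrix of the map `X ↦ A * X - X * B` on `p × q` matrices,
acting on vectorizations. -/
def sylvMat (A : Matrix p p R) (B : Matrix q q R) : Matrix (p × q) (p × q) R :=
  Matrix.of fun x y =>
    A x.1 y.1 * (if x.2 = y.2 then (1 : R) else 0) -
      (if x.1 = y.1 then (1 : R) else 0) * B y.2 x.2

lemma sylvMat_mulVec (A : Matrix p p R) (B : Matrix q q R) (X : Matrix p q R) :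
    sylvMat A B *ᵥ (fun z => X z.1 z.2) = fun z => (A * X - X * B) z.1 z.2 := by
  funext z
  obtain ⟨i, j⟩ := z
  simp only [Matrix.mulVec, dotProduct, Fintype.sum_prod_type, sylvMat, Matrix.of_apply,
    sub_mul, mul_ite, mul_one, mul_zero, ite_mul, one_mul, zero_mul,
    Finset.sum_sub_distrib, Matrix.sub_apply, Matrix.mul_apply]
  congr 1
  · simp [Finset.sum_ite_eq]
  · rw [Finset.sum_comm]
    simp only [Finset.sum_ite_eq, Finset.mem_univ, if_true]
    exact Finset.sum_congr rfl fun l _ => mul_comm (B l j) (X i l)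

lemma sylvMat_map (f : R →+* S) (A : Matrix p p R) (B : Matrix q q R) :
    (sylvMat A B).map f = sylvMat (A.map f) (B.map f) := by
  ext x y
  simp only [sylvMat, Matrix.map_apply, Matrix.of_apply, map_sub, _root_.map_mul]
  congr 1 <;> [skip; skip] <;> congr 1 <;> split <;> simp

lemma isUnit_sylvMat_iff_bijective (A : Matrix p p R) (B : Matrix q q R) :
    IsUnit (sylvMat A B) ↔
      Function.Bijective (fun X : Matrix p q R => A * X - X * B) := by
  have hvec : Function.Bijective (fun (X : Matrix p q R) (z : p × q) => X z.1 z.2) := by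
    constructor
    · intro X Y h
      ext i j
      exact congrFun h (i, j)
    · intro v
      exact ⟨Matrix.of fun i j => v (i, j), rfl⟩
  have key : (fun v => sylvMat A B *ᵥ v) ∘ (fun (X : Matrix p q R) z => X z.1 z.2)
      = (fun (X : Matrix p q R) (z : p × q) => X z.1 z.2) ∘
        (fun X : Matrix p q R => A * X - X * B) := by
    funext X
    exact sylvMat_mulVec A B X
  have h1 : IsUnit (sylvMat A B) ↔ Function.Bijective (fun v => sylvMat A B *ᵥ v) := by
    constructor
    · intro h
      have h2 : IsUnit (Matrix.toLinAlgEquiv' (sylvMat A B)) := h.map _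
      have h3 := (Module.End.isUnit_iff _).mp h2
      exact h3
    · intro h
      have h2 : IsUnit (Matrix.toLinAlgEquiv' (sylvMat A B)) := by
        rw [Module.End.isUnit_iff]
        exact h
      have := h2.map (Matrix.toLinAlgEquiv' (R := R) (n := p × q)).symm
      simpa using this
  rw [h1]
  constructor
  · intro h
    have := h.comp hvec
    rw [key] at this
    exact (Function.Bijective.of_comp_iff' hvec _).mp this
  · intro h
    have h2 := hvec.comp h
    rw [← key] at h2
    exact (Function.Bijective.of_comp_iff _ hvec).mp h2

lemma existsUnique_iff_isUnit_sylvMat (A : Matrix p p R) (B : Matrix q q R) :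
    (∀ C : Matrix p q R, ∃! X : Matrix p q R, A * X - X * B = C) ↔
      IsUnit (sylvMat A B) := by
  rw [isUnit_sylvMat_iff_bijective]
  exact (Function.bijective_iff_existsUnique _).symm

end RothAux

namespace RothAux

variable {p q : Type*} [Fintype p] [Fintype q] [DecidableEq p] [DecidableEq q]

lemma mem_spectrum_iff_isRoot (M : Matrix p p ℂ) (μ : ℂ) :
    μ ∈ spectrum ℂ M ↔ M.charpoly.IsRoot μ := by
  have halg : (algebraMap ℂ (Matrix p p ℂ)) μ = Matrix.scalar p μ := rfl
  have h1 : (M.charpoly).eval μ = (Matrix.scalar p μ - M).det := by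
    rw [Matrix.charpoly, eval_det, Matrix.matPolyEquiv_charmatrix]
    simp
  rw [spectrum.mem_iff, Matrix.isUnit_iff_isUnit_det, isUnit_iff_ne_zero, not_not,
    Polynomial.IsRoot, h1, halg]

lemma exists_right_eigen (M : Matrix p p ℂ) {μ : ℂ} (h : μ ∈ spectrum ℂ M) :
    ∃ v, v ≠ 0 ∧ M *ᵥ v = μ • v := by
  rw [spectrum.mem_iff, Matrix.isUnit_iff_isUnit_det, isUnit_iff_ne_zero, not_not] at h
  obtain ⟨v, hv0, hv⟩ := (Matrix.exists_mulVec_eq_zero_iff).mpr h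
  refine ⟨v, hv0, ?_⟩
  rw [Matrix.sub_mulVec] at hv
  have h2 : (algebraMap ℂ (Matrix p p ℂ)) μ *ᵥ v = μ • v := by
    rw [Algebra.algebraMap_eq_smul_one, Matrix.smul_mulVec, Matrix.one_mulVec]
  rw [h2] at hv
  exact (sub_eq_zero.mp hv).symm

lemma exists_left_eigen (M : Matrix p p ℂ) {μ : ℂ} (h : μ ∈ spectrum ℂ M) :
    ∃ u, u ≠ 0 ∧ u ᵥ* M = μ • u := by
  rw [spectrum.mem_iff, Matrix.isUnit_iff_isUnit_det, isUnit_iff_ne_zero, not_not] at h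
  rw [← Matrix.det_transpose] at h
  obtain ⟨u, hu0, hu⟩ := (Matrix.exists_mulVec_eq_zero_iff).mpr h
  refine ⟨u, hu0, ?_⟩
  rw [Matrix.mulVec_transpose, Matrix.vecMul_sub] at hu
  have h2 : u ᵥ* (algebraMap ℂ (Matrix p p ℂ)) μ = μ • u := by
    rw [Algebra.algebraMap_eq_smul_one, ← Matrix.mulVec_transpose, Matrix.transpose_smul,
      Matrix.transpose_one, Matrix.smul_mulVec, Matrix.one_mulVec]
  rw [h2] at hu
  exact (sub_eq_zero.mp hu).symm

end RothAux

namespace RothAux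

variable {p q : Type*} [Fintype p] [Fintype q] [DecidableEq p] [DecidableEq q]

lemma isUnit_sylvMat_iff_disjoint (A : Matrix p p ℂ) (B : Matrix q q ℂ) :
    IsUnit (sylvMat A B) ↔ spectrum ℂ A ∩ spectrum ℂ B = ∅ := by
  constructor
  · intro h
    by_contra hne
    obtain ⟨μ, hμA, hμB⟩ : ∃ μ, μ ∈ spectrum ℂ A ∧ μ ∈ spectrum ℂ B := by
      obtain ⟨μ, hμ⟩ := Set.nonempty_iff_ne_empty.mpr hne
      exact ⟨μ, hμ.1, hμ.2⟩
    obtain ⟨v, hv0, hv⟩ := exists_right_eigen A hμA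
    obtain ⟨w, hw0, hw⟩ := exists_left_eigen B hμB
    set X : Matrix p q ℂ := Matrix.vecMulVec v w with hXdef
    have h1 : A * X = μ • X := by
      ext i j
      have : (A * X) i j = (A *ᵥ v) i * w j := by
        simp [hXdef, Matrix.mul_apply, Matrix.vecMulVec_apply, Matrix.mulVec,
          dotProduct, Finset.sum_mul, mul_assoc]
      rw [this, hv]
      simp [hXdef, Matrix.vecMulVec_apply, mul_assoc]
    have h2 : X * B = μ • X := by
      ext i j
      have : (X * B) i j = v i * (w ᵥ* B) j := by
        simp [hXdef, Matrix.mul_apply, Matrix.vecMulVec_apply, Matrix.vecMul,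
          dotProduct, Finset.mul_sum, mul_assoc]
      rw [this, hw]
      simp [hXdef, Matrix.vecMulVec_apply]
      ring
    have hX0 : A * X - X * B = 0 := by rw [h1, h2, sub_self]
    have hXne : X ≠ 0 := by
      obtain ⟨i, hi⟩ := Function.ne_iff.mp hv0
      obtain ⟨j, hj⟩ := Function.ne_iff.mp hw0
      intro hc
      have : X i j = 0 := by rw [hc]; rfl
      rw [hXdef, Matrix.vecMulVec_apply] at this
      exact (mul_ne_zero hi hj) this
    have hbij := (isUnit_sylvMat_iff_bijective A B).mp h
    have := hbij.injective (a₁ := X) (a₂ := 0) (by simpa using hX0)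
    exact hXne this
  · intro hdis
    rw [isUnit_sylvMat_iff_bijective]
    let T : Matrix p q ℂ →ₗ[ℂ] Matrix p q ℂ :=
      { toFun := fun X => A * X - X * B
        map_add' := by
          intro X Y
          simp only [Matrix.mul_add, Matrix.add_mul]
          abel
        map_smul' := by
          intro c X
          simp [Matrix.mul_smul, Matrix.smul_mul, smul_sub] }
    have hT : Function.Injective T := by
      rw [injective_iff_map_eq_zero]
      intro X hX
      have hAX : A * X = X * B := by
        have : A * X - X * B = 0 := hX
        rwa [sub_eq_zero] at this
      have hpow : ∀ k : ℕ, A ^ k * X = X * B ^ k := by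
        intro k
        induction k with
        | zero => simp
        | succ k ih =>
          rw [pow_succ, pow_succ, Matrix.mul_assoc, hAX, ← Matrix.mul_assoc, ih,
            Matrix.mul_assoc]
      have hpoly : ∀ P : Polynomial ℂ,
          (Polynomial.aeval A P) * X = X * (Polynomial.aeval B P) := by
        intro P
        induction P using Polynomial.induction_on' with
        | add f g hf hg => simp [Matrix.add_mul, Matrix.mul_add, hf, hg]
        | monomial k c =>
          simp only [Polynomial.aeval_monomial, Algebra.algebraMap_eq_smul_one,
            smul_one_mul, one_mul, Matrix.smul_mul, Matrix.mul_smul, hpow k]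
      have h0 : Polynomial.aeval A (B.charpoly) * X = 0 := by
        rw [hpoly, Matrix.aeval_self_charpoly, Matrix.mul_zero]
      have hu : IsUnit (Polynomial.aeval A (B.charpoly)) := by
        have hfac := (IsAlgClosed.splits B.charpoly).eq_prod_roots_of_monic
          (Matrix.charpoly_monic B)
        have haux : ∀ s : Multiset ℂ,
            (∀ μ ∈ s, IsUnit (Polynomial.aeval A (Polynomial.X - Polynomial.C μ))) →
            IsUnit (Polynomial.aeval A ((s.map fun μ => Polynomial.X - Polynomial.C μ).prod)) := by
          intro s
          induction s using Multiset.induction_on with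
          | empty => intro _; simpa using isUnit_one
          | cons a s ih =>
            intro hs
            rw [Multiset.map_cons, Multiset.prod_cons, _root_.map_mul]
            exact (hs a (Multiset.mem_cons_self a s)).mul
              (ih fun x hx => hs x (Multiset.mem_cons_of_mem hx))
        rw [hfac]
        apply haux
        intro μ hμroot
        have hμB : μ ∈ spectrum ℂ B := by
          rw [mem_spectrum_iff_isRoot]
          exact Polynomial.isRoot_of_mem_roots hμroot
        have hμA : μ ∉ spectrum ℂ A := by
          intro hc
          have : μ ∈ spectrum ℂ A ∩ spectrum ℂ B := ⟨hc, hμB⟩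
          rw [hdis] at this
          exact this
        have hunit : IsUnit ((algebraMap ℂ (Matrix p p ℂ)) μ - A) :=
          spectrum.notMem_iff.mp hμA
        have : (Polynomial.aeval A) (Polynomial.X - Polynomial.C μ)
            = -((algebraMap ℂ (Matrix p p ℂ)) μ - A) := by
          simp [neg_sub]
        rw [this]
        exact hunit.neg
      have h1 : (↑hu.unit⁻¹ : Matrix p p ℂ) * (Polynomial.aeval A (B.charpoly) * X) = 0 := by
        rw [h0, Matrix.mul_zero]
      rwa [← Matrix.mul_assoc, IsUnit.val_inv_mul, Matrix.one_mul] at h1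
    exact ⟨hT, LinearMap.injective_iff_surjective.mp hT⟩

end RothAux

namespace RothAux

open Module

lemma finrank_prod_submodule {V W : Type*} [AddCommGroup V] [Module ℂ V] [AddCommGroup W]
    [Module ℂ W] [FiniteDimensional ℂ V] [FiniteDimensional ℂ W]
    (s : Submodule ℂ V) (t : Submodule ℂ W) :
    Module.finrank ℂ (s.prod t) = Module.finrank ℂ s + Module.finrank ℂ t := by
  have e : (s.prod t) ≃ₗ[ℂ] s × t :=
    { toFun := fun x => (⟨x.1.1, x.2.1⟩, ⟨x.1.2, x.2.2⟩)
      invFun := fun y => ⟨(y.1.1, y.2.1), ⟨y.1.2, y.2.2⟩⟩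
      map_add' := fun _ _ => rfl
      map_smul' := fun _ _ => rfl
      left_inv := fun _ => rfl
      right_inv := fun _ => rfl }
  rw [e.finrank_eq, Module.finrank_prod]

lemma star_dot_self_ne_zero {ι : Type*} [Fintype ι] {u : ι → ℂ} (hu : u ≠ 0) :
    u ⬝ᵥ star u ≠ 0 := by
  have h1 : u ⬝ᵥ star u = ((∑ i, Complex.normSq (u i) : ℝ) : ℂ) := by
    simp only [dotProduct, Pi.star_apply, RCLike.star_def, Complex.mul_conj]
    push_cast
    rfl
  rw [h1]
  rw [Ne, Complex.ofReal_eq_zero]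
  intro h0
  apply hu
  funext i
  have := (Finset.sum_eq_zero_iff_of_nonneg
    (fun j _ => Complex.normSq_nonneg (u j))).mp h0 i (Finset.mem_univ i)
  exact Complex.normSq_eq_zero.mp this

variable {a b : Type*} [Fintype a] [Fintype b] [DecidableEq a] [DecidableEq b]

lemma finrank_ker_conj {U M N : Matrix a a ℂ} (hU : IsUnit U) (h : U * M = N * U) :
    Module.finrank ℂ (LinearMap.ker M.mulVecLin)
      = Module.finrank ℂ (LinearMap.ker N.mulVecLin) := by
  set Ui : Matrix a a ℂ := ↑hU.unit⁻¹ with hUi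
  have hUUi : U * Ui = 1 := hU.mul_val_inv
  have hUiU : Ui * U = 1 := hU.val_inv_mul
  let e : (a → ℂ) ≃ₗ[ℂ] (a → ℂ) :=
    LinearEquiv.ofLinear U.mulVecLin Ui.mulVecLin
      (by rw [← Matrix.mulVecLin_mul, hUUi, Matrix.mulVecLin_one])
      (by rw [← Matrix.mulVecLin_mul, hUiU, Matrix.mulVecLin_one])
  have hMN : M * Ui = Ui * N := by
    have h2 : Ui * (U * M) * Ui = Ui * (N * U) * Ui := by rw [h]
    calc M * Ui = (Ui * U) * M * Ui := by rw [hUiU, Matrix.one_mul]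
    _ = Ui * (U * M) * Ui := by rw [Matrix.mul_assoc Ui U M]
    _ = Ui * (N * U) * Ui := by rw [h]
    _ = Ui * N := by
          rw [← Matrix.mul_assoc Ui N U, Matrix.mul_assoc (Ui * N) U Ui, hUUi, Matrix.mul_one]
  have hmap : (LinearMap.ker M.mulVecLin).map (e : (a → ℂ) →ₗ[ℂ] (a → ℂ))
      = LinearMap.ker N.mulVecLin := by
    ext y
    rw [Submodule.mem_map_equiv]
    simp only [LinearMap.mem_ker, Matrix.mulVecLin_apply]
    have hes : (e.symm y) = Ui *ᵥ y := rfl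
    rw [hes, Matrix.mulVec_mulVec, hMN]
    constructor
    · intro h0
      have := congrArg (fun z => U *ᵥ z) h0
      simpa [Matrix.mulVec_mulVec, ← Matrix.mul_assoc, hUUi] using this
    · intro h0
      rw [← Matrix.mulVec_mulVec, h0, Matrix.mulVec_zero]
  rw [← hmap]
  exact (e.submoduleMap (LinearMap.ker M.mulVecLin)).finrank_eq

lemma sum_elim_eq_zero {x : a → ℂ} {y : b → ℂ} :
    Sum.elim x y = 0 ↔ x = 0 ∧ y = 0 := by
  constructor
  · intro h
    constructor
    · funext i; exact congrFun h (Sum.inl i)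
    · funext j; exact congrFun h (Sum.inr j)
  · rintro ⟨rfl, rfl⟩
    funext i; cases i <;> rfl

lemma finrank_ker_fromBlocks (P : Matrix a a ℂ) (C : Matrix a b ℂ) (Q : Matrix b b ℂ)
    (K₂ : Submodule ℂ (b → ℂ))
    (hchar : ∀ x y, ((Matrix.fromBlocks P C 0 Q) *ᵥ Sum.elim x y = 0) ↔
      (P *ᵥ x = 0 ∧ y ∈ K₂)) :
    Module.finrank ℂ (LinearMap.ker (Matrix.fromBlocks P C 0 Q).mulVecLin)
      = Module.finrank ℂ (LinearMap.ker P.mulVecLin) + Module.finrank ℂ K₂ := by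
  set e := LinearEquiv.sumArrowLequivProdArrow a b ℂ ℂ with he
  have hmap : (LinearMap.ker (Matrix.fromBlocks P C 0 Q).mulVecLin).map
      (e : (a ⊕ b → ℂ) →ₗ[ℂ] (a → ℂ) × (b → ℂ))
      = (LinearMap.ker P.mulVecLin).prod K₂ := by
    ext z
    rw [Submodule.mem_map_equiv, Submodule.mem_prod]
    have hsymm : (e.symm z) = Sum.elim z.1 z.2 := by funext i; cases i <;> rfl
    simp only [LinearMap.mem_ker, Matrix.mulVecLin_apply, hsymm]
    exact hchar z.1 z.2
  rw [← finrank_prod_submodule, ← hmap]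
  exact (e.submoduleMap _).finrank_eq

end RothAux

namespace RothAux

open Module

lemma finrank_inf_hyperplane {W : Type*} [AddCommGroup W] [Module ℂ W] [FiniteDimensional ℂ W]
    (K : Submodule ℂ W) (g : W →ₗ[ℂ] ℂ) (v : W) (hvK : v ∈ K) (hgv : g v ≠ 0) :
    Module.finrank ℂ (K ⊓ LinearMap.ker g : Submodule ℂ W) + 1 = Module.finrank ℂ K := by
  set g' := g.comp K.subtype with hg'
  have hker : LinearMap.ker g' = Submodule.comap K.subtype (K ⊓ LinearMap.ker g) := by
    rw [hg', LinearMap.ker_comp, Submodule.comap_inf, Submodule.comap_subtype_self, top_inf_eq]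
  have hrange : LinearMap.range g' = ⊤ := by
    rw [eq_top_iff]
    intro z _
    have hz : z = (z / g v) • g v := by rw [smul_eq_mul, div_mul_cancel₀ _ hgv]
    have hmem : g v ∈ LinearMap.range g' := ⟨⟨v, hvK⟩, rfl⟩
    rw [hz]
    exact Submodule.smul_mem _ _ hmem
  have hrn := LinearMap.finrank_range_add_finrank_ker g'
  rw [hrange] at hrn
  rw [finrank_top, Module.finrank_self] at hrn
  have heq : Module.finrank ℂ (LinearMap.ker g')
      = Module.finrank ℂ (K ⊓ LinearMap.ker g : Submodule ℂ W) := by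
    rw [hker]
    exact (Submodule.comapSubtypeEquivOfLe inf_le_left).finrank_eq
  omega

variable {a b : Type*} [Fintype a] [Fintype b] [DecidableEq a] [DecidableEq b]

lemma not_isConj_of_common_eigen (A₀ : Matrix a a ℂ) (B₀ : Matrix b b ℂ) {μ : ℂ}
    (hA : μ ∈ spectrum ℂ A₀) (hB : μ ∈ spectrum ℂ B₀) :
    ∃ C₀ : Matrix a b ℂ,
      ¬ IsConj (Matrix.fromBlocks A₀ 0 0 B₀) (Matrix.fromBlocks A₀ C₀ 0 B₀) := by
  obtain ⟨u, hu0, hu⟩ := exists_left_eigen A₀ hA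
  obtain ⟨v, hv0, hv⟩ := exists_right_eigen B₀ hB
  set P : Matrix a a ℂ := μ • 1 - A₀ with hP
  set Q : Matrix b b ℂ := μ • 1 - B₀ with hQ
  have huP : u ᵥ* P = 0 := by
    rw [hP, Matrix.vecMul_sub, hu]
    have : u ᵥ* ((μ : ℂ) • (1 : Matrix a a ℂ)) = μ • u := by
      rw [← Matrix.mulVec_transpose, Matrix.transpose_smul, Matrix.transpose_one,
        Matrix.smul_mulVec, Matrix.one_mulVec]
    rw [this, sub_self]
  have hvQ : Q *ᵥ v = 0 := by
    rw [hQ, Matrix.sub_mulVec, hv, Matrix.smul_mulVec, Matrix.one_mulVec, sub_self]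
  set C₀ : Matrix a b ℂ := Matrix.vecMulVec (star u) (star v) with hC₀
  refine ⟨C₀, ?_⟩
  intro hconj
  obtain ⟨c, hc⟩ := hconj
  -- hc : ↑c * fromBlocks A₀ 0 0 B₀ = fromBlocks A₀ C₀ 0 B₀ * ↑c
  have hc' : (↑c : Matrix (a ⊕ b) (a ⊕ b) ℂ) * (μ • 1 - Matrix.fromBlocks A₀ 0 0 B₀)
      = (μ • 1 - Matrix.fromBlocks A₀ C₀ 0 B₀) * (↑c : Matrix (a ⊕ b) (a ⊕ b) ℂ) := by
    rw [Matrix.mul_sub, Matrix.sub_mul, hc.eq, Matrix.mul_smul, Matrix.smul_mul,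
      Matrix.mul_one, Matrix.one_mul]
  have hblock1 : μ • (1 : Matrix (a ⊕ b) (a ⊕ b) ℂ) - Matrix.fromBlocks A₀ 0 0 B₀
      = Matrix.fromBlocks P 0 0 Q := by
    rw [← Matrix.fromBlocks_one, Matrix.fromBlocks_smul, sub_eq_add_neg,
      Matrix.fromBlocks_neg, Matrix.fromBlocks_add]
    simp [hP, hQ, sub_eq_add_neg]
  have hblock2 : μ • (1 : Matrix (a ⊕ b) (a ⊕ b) ℂ) - Matrix.fromBlocks A₀ C₀ 0 B₀
      = Matrix.fromBlocks P (-C₀) 0 Q := by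
    rw [← Matrix.fromBlocks_one, Matrix.fromBlocks_smul, sub_eq_add_neg,
      Matrix.fromBlocks_neg, Matrix.fromBlocks_add]
    simp [hP, hQ, sub_eq_add_neg]
  rw [hblock1, hblock2] at hc'
  -- the linear functional y ↦ (star v) ⬝ᵥ y
  let g : (b → ℂ) →ₗ[ℂ] ℂ :=
    { toFun := fun y => star v ⬝ᵥ y
      map_add' := fun y z => dotProduct_add _ _ _
      map_smul' := fun s y => dotProduct_smul s _ _ }
  have hCy : ∀ y : b → ℂ, (-C₀) *ᵥ y = -((star v ⬝ᵥ y) • star u) := by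
    intro y
    rw [Matrix.neg_mulVec]
    congr 1
    funext i
    simp only [hC₀, Matrix.mulVec, dotProduct, Matrix.vecMulVec_apply, Pi.smul_apply,
      smul_eq_mul]
    rw [Finset.sum_mul]
    exact Finset.sum_congr rfl fun j _ => by ring
  have hudots : u ⬝ᵥ star u ≠ 0 := star_dot_self_ne_zero hu0
  -- kernel characterizations
  have hchar1 : ∀ x y, ((Matrix.fromBlocks P 0 0 Q) *ᵥ Sum.elim x y = 0) ↔
      (P *ᵥ x = 0 ∧ y ∈ LinearMap.ker Q.mulVecLin) := by
    intro x y
    rw [Matrix.fromBlocks_mulVec, Matrix.zero_mulVec, Matrix.zero_mulVec, add_zero, zero_add,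
      sum_elim_eq_zero]
    simp only [Sum.elim_comp_inl, Sum.elim_comp_inr]
    simp [LinearMap.mem_ker, Matrix.mulVecLin_apply]
  have hchar2 : ∀ x y, ((Matrix.fromBlocks P (-C₀) 0 Q) *ᵥ Sum.elim x y = 0) ↔
      (P *ᵥ x = 0 ∧ y ∈ LinearMap.ker Q.mulVecLin ⊓ LinearMap.ker g) := by
    intro x y
    rw [Matrix.fromBlocks_mulVec, Matrix.zero_mulVec, zero_add, sum_elim_eq_zero]
    simp only [Sum.elim_comp_inl, Sum.elim_comp_inr]
    constructor
    · rintro ⟨h1, h2⟩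
      have hdot : u ⬝ᵥ (P *ᵥ x + (-C₀) *ᵥ y) = 0 := by rw [h1, dotProduct_zero]
      rw [dotProduct_add, Matrix.dotProduct_mulVec, huP, zero_dotProduct,
        zero_add, hCy, dotProduct_neg, dotProduct_smul] at hdot
      have hgy : star v ⬝ᵥ y = 0 := by
        have := neg_eq_zero.mp hdot
        rcases mul_eq_zero.mp this with h | h
        · exact h
        · exact absurd h hudots
      have hCy0 : (-C₀) *ᵥ y = 0 := by rw [hCy, hgy, zero_smul, neg_zero]
      refine ⟨by rwa [hCy0, add_zero] at h1, ?_, hgy⟩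
      simpa [LinearMap.mem_ker, Matrix.mulVecLin_apply] using h2
    · rintro ⟨h1, h2, h3⟩
      have hgy : star v ⬝ᵥ y = 0 := h3
      have hCy0 : (-C₀) *ᵥ y = 0 := by rw [hCy, hgy, zero_smul, neg_zero]
      refine ⟨by rw [h1, hCy0, add_zero], ?_⟩
      simpa [LinearMap.mem_ker, Matrix.mulVecLin_apply] using h2
  have hn1 := finrank_ker_fromBlocks P 0 Q (LinearMap.ker Q.mulVecLin) hchar1
  have hn2 := finrank_ker_fromBlocks P (-C₀) Q
    (LinearMap.ker Q.mulVecLin ⊓ LinearMap.ker g) hchar2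
  have hconjrank := finrank_ker_conj c.isUnit hc'
  have hvK : v ∈ LinearMap.ker Q.mulVecLin := by
    simpa [LinearMap.mem_ker, Matrix.mulVecLin_apply] using hvQ
  have hgv : g v ≠ 0 := by
    have : g v = v ⬝ᵥ star v := dotProduct_comm _ _
    rw [this]
    exact star_dot_self_ne_zero hv0
  have hhyp := finrank_inf_hyperplane (LinearMap.ker Q.mulVecLin) g v hvK hgv
  rw [hn1, hn2] at hconjrank
  omega

end RothAux

namespace RothAux

lemma isUnit_iff_char {𝒜 : Type*} [NormedCommRing 𝒜] [NormedAlgebra ℂ 𝒜] [CompleteSpace 𝒜]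
    (a : 𝒜) : IsUnit a ↔ ∀ φ : characterSpace ℂ 𝒜, φ a ≠ 0 := by
  constructor
  · intro h φ h0
    exact (h.map φ).ne_zero h0
  · intro h
    by_contra hn
    obtain ⟨φ, hφ⟩ := WeakDual.CharacterSpace.exists_apply_eq_zero hn
    exact h φ hφ

end RothAux

theorem roth_tfae_banach_algebra (n m : ℕ)
    {𝒜 : Type*} [NormedCommRing 𝒜] [NormedAlgebra ℂ 𝒜] [CompleteSpace 𝒜] [Nontrivial 𝒜]
    (hss : ∀ a : 𝒜, (∀ φ : characterSpace ℂ 𝒜, φ a = 0) → a = 0)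
    (A : Matrix (Fin n) (Fin n) 𝒜) (B : Matrix (Fin m) (Fin m) 𝒜) :
    List.TFAE
      [∀ C : Matrix (Fin n) (Fin m) 𝒜,
        IsConj (Matrix.fromBlocks A 0 0 B) (Matrix.fromBlocks A C 0 B),
       ∀ C : Matrix (Fin n) (Fin m) 𝒜, ∃! X : Matrix (Fin n) (Fin m) 𝒜, A * X - X * B = C,
       ∀ φ : characterSpace ℂ 𝒜, spectrum ℂ (A.map φ) ∩ spectrum ℂ (B.map φ) = ∅] := by
  tfae_have 2 → 1 := by
    intro h2 C
    obtain ⟨X, hX, -⟩ := h2 (-C)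
    have hX' : X * B = A * X + C := by
      rw [sub_eq_iff_eq_add] at hX
      rw [hX]
      abel
    refine ⟨⟨Matrix.fromBlocks 1 X 0 1, Matrix.fromBlocks 1 (-X) 0 1, ?_, ?_⟩, ?_⟩
    · rw [Matrix.fromBlocks_multiply]
      simp [← Matrix.fromBlocks_one]
    · rw [Matrix.fromBlocks_multiply]
      simp [← Matrix.fromBlocks_one]
    · show Matrix.fromBlocks 1 X 0 1 * Matrix.fromBlocks A 0 0 B
        = Matrix.fromBlocks A C 0 B * Matrix.fromBlocks 1 X 0 1
      rw [Matrix.fromBlocks_multiply, Matrix.fromBlocks_multiply]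
      simp [hX']
  tfae_have 1 → 3 := by
    intro h1 φ
    by_contra hne
    obtain ⟨μ, hμ⟩ := Set.nonempty_iff_ne_empty.mpr hne
    obtain ⟨C₀, hC₀⟩ := RothAux.not_isConj_of_common_eigen (A.map φ) (B.map φ) hμ.1 hμ.2
    apply hC₀
    set ψ : 𝒜 →+* ℂ := RingHomClass.toRingHom φ with hψ
    have hψφ : ⇑ψ = ⇑φ := rfl
    have hconj := h1 (C₀.map (algebraMap ℂ 𝒜))
    have h2 := ψ.mapMatrix.toMonoidHom.map_isConj hconj
    simp only [RingHom.toMonoidHom_eq_coe, MonoidHom.coe_coe, RingHom.mapMatrix_apply] at h2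
    have hzero : ∀ {k l : ℕ}, (0 : Matrix (Fin k) (Fin l) 𝒜).map ψ = 0 := by
      intro k l
      ext i j
      simp [Matrix.map_apply]
    have hCmap : (C₀.map (algebraMap ℂ 𝒜)).map ψ = C₀ := by
      ext i j
      simp only [Matrix.map_apply, hψφ]
      exact AlgHomClass.commutes φ _
    have e1 : (Matrix.fromBlocks A 0 0 B).map ψ
        = Matrix.fromBlocks (A.map φ) 0 0 (B.map φ) := by
      rw [Matrix.fromBlocks_map, hzero, hzero, hψφ]
    have e2 : (Matrix.fromBlocks A (C₀.map (algebraMap ℂ 𝒜)) 0 B).map ψ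
        = Matrix.fromBlocks (A.map φ) C₀ 0 (B.map φ) := by
      rw [Matrix.fromBlocks_map, hzero, hCmap, hψφ]
    rwa [e1, e2] at h2
  tfae_have 2 ↔ 3 := by
    rw [RothAux.existsUnique_iff_isUnit_sylvMat, Matrix.isUnit_iff_isUnit_det,
      RothAux.isUnit_iff_char]
    constructor
    · intro h φ
      have hdet : φ ((RothAux.sylvMat A B).det)
          = (RothAux.sylvMat (A.map φ) (B.map φ)).det := by
        rw [show φ ((RothAux.sylvMat A B).det)
            = (RingHomClass.toRingHom φ) ((RothAux.sylvMat A B).det) from rfl,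
          RingHom.map_det, RingHom.mapMatrix_apply, RothAux.sylvMat_map]
        rfl
      have hne := h φ
      rw [hdet] at hne
      rw [← RothAux.isUnit_sylvMat_iff_disjoint]
      rw [Matrix.isUnit_iff_isUnit_det, isUnit_iff_ne_zero]
      exact hne
    · intro h φ
      have hdet : φ ((RothAux.sylvMat A B).det)
          = (RothAux.sylvMat (A.map φ) (B.map φ)).det := by
        rw [show φ ((RothAux.sylvMat A B).det)
            = (RingHomClass.toRingHom φ) ((RothAux.sylvMat A B).det) from rfl,
          RingHom.map_det, RingHom.mapMatrix_apply, RothAux.sylvMat_map]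
        rfl
      rw [hdet]
      rw [← isUnit_iff_ne_zero, ← Matrix.isUnit_iff_isUnit_det,
        RothAux.isUnit_sylvMat_iff_disjoint]
      exact h φ
  tfae_finish
end

section
/- Let 𝒜 be a commutative unital complex semisimple Banach algebra, and let A_{ii} ∈ 𝒜^{d_i×d_i} for i = 1,…,n satisfy: for all φ ∈ M_𝒜 and all 1 ≤ i < j ≤ n, σ(Â_{ii}(φ)) ∩ σ(Â_{jj}(φ)) = ∅. Then for any choice of off-diagonal blocks A_{ij} ∈ 𝒜^{d_i×d_j} (i < j), the block upper triangular matrix with diagonal blocks A_{11},…,A_{nn} and upper blocks A_{ij} is similar over 𝒜 to the block diagonal matrix diag(A_{11},…,A_{nn}). -/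
open WeakDual Matrix Polynomial

private lemma list_prod_isUnit {M : Type*} [Monoid M] (s : List M)
    (h : ∀ x ∈ s, IsUnit x) : IsUnit s.prod := by
  induction s with
  | nil => simpa using isUnit_one
  | cons a s ih =>
    rw [List.prod_cons]
    exact (h a List.mem_cons_self).mul (ih fun x hx => h x (List.mem_cons_of_mem a hx))

private lemma eval_charpoly' {k : ℕ} (Q : Matrix (Fin k) (Fin k) ℂ) (μ : ℂ) :
    Q.charpoly.eval μ = (μ • (1 : Matrix (Fin k) (Fin k) ℂ) - Q).det := by
  have h := (evalRingHom μ).map_det (charmatrix Q)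
  rw [RingHom.mapMatrix_apply] at h
  rw [Matrix.charpoly, show eval μ Q.charmatrix.det = (evalRingHom μ) Q.charmatrix.det from rfl, h]
  congr 1
  ext i j
  by_cases hij : i = j
  · subst hij
    simp [charmatrix_apply_eq, Matrix.one_apply]
  · simp [charmatrix_apply_ne _ _ _ hij, Matrix.one_apply_ne hij, Matrix.sub_apply]

private lemma sylvester_unique {m k : ℕ} (P : Matrix (Fin m) (Fin m) ℂ)
    (Q : Matrix (Fin k) (Fin k) ℂ)
    (hdisj : spectrum ℂ P ∩ spectrum ℂ Q = ∅)
    (X : Matrix (Fin m) (Fin k) ℂ) (hX : P * X = X * Q) : X = 0 := by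
  have hpow : ∀ n : ℕ, P ^ n * X = X * Q ^ n := by
    intro n; induction n with
    | zero => simp
    | succ n ih => rw [pow_succ, pow_succ, Matrix.mul_assoc, hX, ← Matrix.mul_assoc, ih,
        Matrix.mul_assoc]
  have haeval : ∀ p : ℂ[X], (aeval P p) * X = X * (aeval Q p) := by
    intro p
    induction p using Polynomial.induction_on' with
    | add p q hp hq => rw [map_add, map_add, Matrix.add_mul, Matrix.mul_add, hp, hq]
    | monomial n c =>
      simp only [aeval_monomial, Algebra.algebraMap_eq_smul_one, smul_mul_assoc, one_mul,
        mul_smul_comm]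
      rw [Matrix.smul_mul, hpow n, Matrix.mul_smul]
  have h0 : (aeval P Q.charpoly) * X = 0 := by
    rw [haeval, Matrix.aeval_self_charpoly, Matrix.mul_zero]
  have hmono := Q.charpoly_monic
  have hfactor := (IsAlgClosed.splits Q.charpoly).eq_prod_roots_of_monic hmono
  rw [← Multiset.coe_toList Q.charpoly.roots, Multiset.map_coe, Multiset.prod_coe] at hfactor
  have hunit : IsUnit (aeval P Q.charpoly) := by
    rw [hfactor, map_list_prod]
    apply list_prod_isUnit
    intro x hx
    rw [List.map_map, List.mem_map] at hx
    obtain ⟨μ, hμ, rfl⟩ := hx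
    have hμroot : μ ∈ Q.charpoly.roots := by
      rw [← Multiset.coe_toList Q.charpoly.roots]
      exact Multiset.mem_coe.mpr hμ
    have hμQ : μ ∈ spectrum ℂ Q := by
      have hroot : Q.charpoly.eval μ = 0 :=
        (Polynomial.mem_roots hmono.ne_zero).mp hμroot
      rw [spectrum.mem_iff, Algebra.algebraMap_eq_smul_one]
      intro hu
      have h2 := (Matrix.isUnit_iff_isUnit_det _).mp hu
      rw [← eval_charpoly', hroot] at h2
      exact h2.ne_zero rfl
    have hμP : μ ∉ spectrum ℂ P := by
      intro hP
      have hmem : μ ∈ spectrum ℂ P ∩ spectrum ℂ Q := ⟨hP, hμQ⟩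
      rw [hdisj] at hmem
      exact hmem
    rw [spectrum.notMem_iff, Algebra.algebraMap_eq_smul_one] at hμP
    simp only [Function.comp_apply, map_sub, aeval_X, aeval_C, Algebra.algebraMap_eq_smul_one]
    have := hμP.neg
    rwa [neg_sub] at this
  obtain ⟨u, hu⟩ := hunit
  have h1 : (↑u⁻¹ : Matrix (Fin m) (Fin m) ℂ) * ((aeval P Q.charpoly) * X) = 0 := by
    rw [h0, Matrix.mul_zero]
  rwa [← hu, ← Matrix.mul_assoc, Units.inv_mul, Matrix.one_mul] at h1

private def emb {N : ℕ} {d : Fin N → ℕ} {R : Type*} [CommRing R]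
    (f : {p : (Σ i : Fin N, Fin (d i)) × (Σ i : Fin N, Fin (d i)) // p.1.1 < p.2.1} → R) :
    Matrix (Σ i : Fin N, Fin (d i)) (Σ i : Fin N, Fin (d i)) R :=
  fun a b => if h : a.1 < b.1 then f ⟨(a, b), h⟩ else 0

private lemma emb_not_lt {N : ℕ} {d : Fin N → ℕ} {R : Type*} [CommRing R]
    (f : {p : (Σ i : Fin N, Fin (d i)) × (Σ i : Fin N, Fin (d i)) // p.1.1 < p.2.1} → R)
    {a b : Σ i : Fin N, Fin (d i)} (h : ¬ a.1 < b.1) : emb f a b = 0 := dif_neg h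

private lemma emb_lt {N : ℕ} {d : Fin N → ℕ} {R : Type*} [CommRing R]
    (f : {p : (Σ i : Fin N, Fin (d i)) × (Σ i : Fin N, Fin (d i)) // p.1.1 < p.2.1} → R)
    {a b : Σ i : Fin N, Fin (d i)} (h : a.1 < b.1) : emb f a b = f ⟨(a, b), h⟩ := dif_pos h

private def Lmap {N : ℕ} (d : Fin N → ℕ) {R : Type*} [CommRing R]
    (A : ∀ i : Fin N, Matrix (Fin (d i)) (Fin (d i)) R)
    (T : Matrix (Σ i : Fin N, Fin (d i)) (Σ i : Fin N, Fin (d i)) R) :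
    ({p : (Σ i : Fin N, Fin (d i)) × (Σ i : Fin N, Fin (d i)) // p.1.1 < p.2.1} → R) →ₗ[R]
    ({p : (Σ i : Fin N, Fin (d i)) × (Σ i : Fin N, Fin (d i)) // p.1.1 < p.2.1} → R) where
  toFun f := fun p => (emb f * blockDiagonal' A - T * emb f) p.1.1 p.1.2
  map_add' f g := by
    have h : emb (R := R) (f + g) = emb f + emb g := by
      ext a b
      by_cases h : a.1 < b.1 <;> simp [emb, h]
    funext p
    simp only [h, Matrix.mul_add, Matrix.add_mul, Pi.add_apply]
    rw [show emb f * blockDiagonal' A + emb g * blockDiagonal' A -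
      (T * emb f + T * emb g) = (emb f * blockDiagonal' A - T * emb f) +
      (emb g * blockDiagonal' A - T * emb g) by abel]
    rw [Matrix.add_apply]
  map_smul' c f := by
    have h : emb (R := R) (c • f) = c • emb f := by
      ext a b
      by_cases h : a.1 < b.1 <;> simp [emb, h]
    funext p
    simp only [h, Matrix.smul_mul, Matrix.mul_smul, RingHom.id_apply, Pi.smul_apply]
    rw [← smul_sub, Matrix.smul_apply, smul_eq_mul]

private lemma L_support {N : ℕ} {d : Fin N → ℕ} {R : Type*} [CommRing R]
    (A : ∀ i : Fin N, Matrix (Fin (d i)) (Fin (d i)) R)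
    (T : Matrix (Σ i : Fin N, Fin (d i)) (Σ i : Fin N, Fin (d i)) R)
    (hlowerS : ∀ a b : Σ i : Fin N, Fin (d i), b.1 < a.1 → T a b = 0)
    (f : {p : (Σ i : Fin N, Fin (d i)) × (Σ i : Fin N, Fin (d i)) // p.1.1 < p.2.1} → R)
    (a b : Σ i : Fin N, Fin (d i)) (h : ¬ a.1 < b.1) :
    (emb f * blockDiagonal' A - T * emb f) a b = 0 := by
  rw [Matrix.sub_apply, Matrix.mul_apply, Matrix.mul_apply]
  have h1 : ∑ c, emb f a c * blockDiagonal' A c b = 0 := by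
    apply Finset.sum_eq_zero
    intro c _
    by_cases hc : a.1 < c.1
    · have hne : c.1 ≠ b.1 := fun hcb => h (hcb ▸ hc)
      obtain ⟨k, z⟩ := c; obtain ⟨l, w⟩ := b
      rw [blockDiagonal'_apply_ne _ _ _ hne, mul_zero]
    · rw [emb_not_lt f hc, zero_mul]
  have h2 : ∑ c, T a c * emb f c b = 0 := by
    apply Finset.sum_eq_zero
    intro c _
    by_cases hc : c.1 < b.1
    · rw [hlowerS a c (lt_of_lt_of_le hc (not_lt.mp h)), zero_mul]
    · rw [emb_not_lt f hc, mul_zero]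
  rw [h1, h2, sub_zero]

private lemma emb_L {N : ℕ} {d : Fin N → ℕ} {R : Type*} [CommRing R]
    (A : ∀ i : Fin N, Matrix (Fin (d i)) (Fin (d i)) R)
    (T : Matrix (Σ i : Fin N, Fin (d i)) (Σ i : Fin N, Fin (d i)) R)
    (hlowerS : ∀ a b : Σ i : Fin N, Fin (d i), b.1 < a.1 → T a b = 0)
    (f : {p : (Σ i : Fin N, Fin (d i)) × (Σ i : Fin N, Fin (d i)) // p.1.1 < p.2.1} → R) :
    emb (Lmap d A T f) = emb f * blockDiagonal' A - T * emb f := by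
  ext a b
  by_cases h : a.1 < b.1
  · rw [emb_lt _ h]; rfl
  · rw [emb_not_lt _ h]
    exact (L_support A T hlowerS f a b h).symm

private lemma emb_map {N : ℕ} {d : Fin N → ℕ} {R R' : Type*} [CommRing R] [CommRing R']
    (ψ : R →+* R')
    (f : {p : (Σ i : Fin N, Fin (d i)) × (Σ i : Fin N, Fin (d i)) // p.1.1 < p.2.1} → R) :
    emb (fun p => ψ (f p)) = (emb f).map ψ := by
  ext a b
  by_cases h : a.1 < b.1 <;> simp [emb, h, Matrix.map_apply]

private lemma Lmap_map {N : ℕ} {d : Fin N → ℕ} {R R' : Type*} [CommRing R] [CommRing R']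
    (ψ : R →+* R')
    (A : ∀ i : Fin N, Matrix (Fin (d i)) (Fin (d i)) R)
    (T : Matrix (Σ i : Fin N, Fin (d i)) (Σ i : Fin N, Fin (d i)) R)
    (f : {p : (Σ i : Fin N, Fin (d i)) × (Σ i : Fin N, Fin (d i)) // p.1.1 < p.2.1} → R) :
    Lmap d (fun i => (A i).map ψ) (T.map ψ) (fun p => ψ (f p)) = fun p => ψ (Lmap d A T f p) := by
  funext p
  show ((emb fun p => ψ (f p)) * blockDiagonal' (fun i => (A i).map ψ) -
      T.map ψ * (emb fun p => ψ (f p))) p.1.1 p.1.2 = _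
  rw [emb_map, ← blockDiagonal'_map A ψ (map_zero ψ), ← Matrix.map_mul, ← Matrix.map_mul,
    ← Matrix.map_sub ψ (map_sub ψ)]
  rfl

section
variable {N : ℕ} {d : Fin N → ℕ}

private lemma blk_mul {R : Type*} [CommRing R]
    (M M' : Matrix (Σ i : Fin N, Fin (d i)) (Σ i : Fin N, Fin (d i)) R)
    (i j : Fin N) (x : Fin (d i)) (y : Fin (d j)) :
    (M * M') ⟨i, x⟩ ⟨j, y⟩ =
      ∑ k : Fin N, ∑ z : Fin (d k), M ⟨i, x⟩ ⟨k, z⟩ * M' ⟨k, z⟩ ⟨j, y⟩ := by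
  rw [Matrix.mul_apply, ← Finset.univ_sigma_univ, Finset.sum_sigma]

private lemma upper_ker_zero (Aℂ : ∀ i : Fin N, Matrix (Fin (d i)) (Fin (d i)) ℂ)
    (Tℂ : Matrix (Σ i : Fin N, Fin (d i)) (Σ i : Fin N, Fin (d i)) ℂ)
    (hdiagS : ∀ (i : Fin N) (x y : Fin (d i)), Tℂ ⟨i, x⟩ ⟨i, y⟩ = Aℂ i x y)
    (hlowerS : ∀ a b : Σ i : Fin N, Fin (d i), b.1 < a.1 → Tℂ a b = 0)
    (hspecℂ : ∀ i j : Fin N, i < j → spectrum ℂ (Aℂ i) ∩ spectrum ℂ (Aℂ j) = ∅)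
    (X : Matrix (Σ i : Fin N, Fin (d i)) (Σ i : Fin N, Fin (d i)) ℂ)
    (hupper : ∀ a b : Σ i : Fin N, Fin (d i), ¬ a.1 < b.1 → X a b = 0)
    (hX : X * blockDiagonal' Aℂ = Tℂ * X) : X = 0 := by
  have key : ∀ n : ℕ, ∀ i j : Fin N, (j : ℕ) - (i : ℕ) ≤ n →
      ∀ (x : Fin (d i)) (y : Fin (d j)), X ⟨i, x⟩ ⟨j, y⟩ = 0 := by
    intro n
    induction n with
    | zero =>
      intro i j hij x y
      exact hupper _ _ (by simp only [Fin.lt_def]; omega)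
    | succ n ih =>
      intro i j hij x y
      by_cases hlt : i < j
      · have hYeq : Aℂ i * (Matrix.of fun x y => X ⟨i, x⟩ ⟨j, y⟩) =
            (Matrix.of fun (x : Fin (d i)) (y : Fin (d j)) => X ⟨i, x⟩ ⟨j, y⟩) * Aℂ j := by
          ext u v
          have h1 := congrFun (congrFun hX ⟨i, u⟩) ⟨j, v⟩
          rw [blk_mul, blk_mul] at h1
          have hL : ∑ k : Fin N, ∑ z : Fin (d k),
              X ⟨i, u⟩ ⟨k, z⟩ * blockDiagonal' Aℂ ⟨k, z⟩ ⟨j, v⟩ =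
              ∑ z : Fin (d j), X ⟨i, u⟩ ⟨j, z⟩ * Aℂ j z v := by
            rw [Finset.sum_eq_single_of_mem j (Finset.mem_univ _)]
            · exact Finset.sum_congr rfl fun z _ => by rw [blockDiagonal'_apply_eq]
            · intro k _ hk
              exact Finset.sum_eq_zero fun z _ => by
                rw [blockDiagonal'_apply_ne _ _ _ hk, mul_zero]
          have hR : ∑ k : Fin N, ∑ z : Fin (d k),
              Tℂ ⟨i, u⟩ ⟨k, z⟩ * X ⟨k, z⟩ ⟨j, v⟩ =
              ∑ z : Fin (d i), Aℂ i u z * X ⟨i, z⟩ ⟨j, v⟩ := by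
            rw [Finset.sum_eq_single_of_mem i (Finset.mem_univ _)]
            · exact Finset.sum_congr rfl fun z _ => by rw [hdiagS]
            · intro k _ hk
              apply Finset.sum_eq_zero
              intro z _
              rcases lt_or_gt_of_ne hk with h' | h'
              · rw [hlowerS _ _ h', zero_mul]
              · by_cases hkj : k < j
                · rw [ih k j (by simp only [gt_iff_lt, Fin.lt_def] at h' hlt hkj; omega) z v, mul_zero]
                · rw [hupper _ _ hkj, mul_zero]
          rw [hL, hR] at h1
          rw [Matrix.mul_apply, Matrix.mul_apply]
          exact h1.symm
        have hzero := sylvester_unique (Aℂ i) (Aℂ j) (hspecℂ i j hlt) _ hYeq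
        exact congrFun (congrFun hzero x) y
      · exact hupper _ _ hlt
  ext a b
  obtain ⟨i, x⟩ := a; obtain ⟨j, y⟩ := b
  rw [key ((j : ℕ) - (i : ℕ)) i j le_rfl x y]
  rfl
end

theorem block_triangular_similar_block_diagonal (N : ℕ) (d : Fin N → ℕ)
    {𝒜 : Type*} [NormedCommRing 𝒜] [NormedAlgebra ℂ 𝒜] [CompleteSpace 𝒜] [Nontrivial 𝒜]
    (hss : ∀ a : 𝒜, (∀ φ : characterSpace ℂ 𝒜, φ a = 0) → a = 0)
    (A : ∀ i : Fin N, Matrix (Fin (d i)) (Fin (d i)) 𝒜)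
    (hspec : ∀ φ : characterSpace ℂ 𝒜, ∀ i j : Fin N, i < j →
      spectrum ℂ ((A i).map φ) ∩ spectrum ℂ ((A j).map φ) = ∅)
    (T : Matrix (Σ i : Fin N, Fin (d i)) (Σ i : Fin N, Fin (d i)) 𝒜)
    (hdiag : ∀ (i : Fin N) (x y : Fin (d i)), T ⟨i, x⟩ ⟨i, y⟩ = A i x y)
    (hlower : ∀ (i j : Fin N), j < i → ∀ (x : Fin (d i)) (y : Fin (d j)),
      T ⟨i, x⟩ ⟨j, y⟩ = 0) :
    IsConj (Matrix.blockDiagonal' A) T := by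
  classical
  have hlowerS : ∀ a b : Σ i : Fin N, Fin (d i), b.1 < a.1 → T a b = 0 := by
    rintro ⟨i, x⟩ ⟨j, y⟩ h
    exact hlower i j h x y
  set b𝒜 := Pi.basisFun 𝒜
    {p : (Σ i : Fin N, Fin (d i)) × (Σ i : Fin N, Fin (d i)) // p.1.1 < p.2.1} with hb𝒜
  have hM : IsUnit (LinearMap.toMatrix b𝒜 b𝒜 (Lmap d A T)).det := by
    by_contra hnu
    obtain ⟨φ, hφ⟩ := WeakDual.CharacterSpace.exists_apply_eq_zero hnu
    set ψ : 𝒜 →+* ℂ := RingHomClass.toRingHom φ with hψ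
    set Aψ : ∀ i : Fin N, Matrix (Fin (d i)) (Fin (d i)) ℂ := fun i => (A i).map ψ with hAψ
    set Tψ := T.map ψ with hTψ
    set bℂ := Pi.basisFun ℂ
      {p : (Σ i : Fin N, Fin (d i)) × (Σ i : Fin N, Fin (d i)) // p.1.1 < p.2.1} with hbℂ
    have hmap : (LinearMap.toMatrix b𝒜 b𝒜 (Lmap d A T)).map ψ
        = LinearMap.toMatrix bℂ bℂ (Lmap d Aψ Tψ) := by
      ext p q
      rw [Matrix.map_apply, LinearMap.toMatrix_apply, LinearMap.toMatrix_apply,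
        hb𝒜, hbℂ, Pi.basisFun_repr, Pi.basisFun_repr, Pi.basisFun_apply, Pi.basisFun_apply]
      have hsingle : (fun p' => ψ ((Pi.single q 1 :
          {p : (Σ i : Fin N, Fin (d i)) × (Σ i : Fin N, Fin (d i)) // p.1.1 < p.2.1} → 𝒜) p'))
          = (Pi.single q 1 :
          {p : (Σ i : Fin N, Fin (d i)) × (Σ i : Fin N, Fin (d i)) // p.1.1 < p.2.1} → ℂ) := by
        funext r
        rcases eq_or_ne r q with rfl | hr
        · simp
        · simp [Pi.single_eq_of_ne hr]
      rw [hAψ, hTψ, ← hsingle, Lmap_map]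
    have hinj : Function.Injective (Lmap d Aψ Tψ) := by
      rw [← LinearMap.ker_eq_bot, Submodule.eq_bot_iff]
      intro f hf
      rw [LinearMap.mem_ker] at hf
      have hlowerSψ : ∀ a b : Σ i : Fin N, Fin (d i), b.1 < a.1 → Tψ a b = 0 := by
        intro a b h
        rw [hTψ, Matrix.map_apply, hlowerS a b h, map_zero]
      have hembL := emb_L Aψ Tψ hlowerSψ f
      rw [hf] at hembL
      have hemb0 : emb (R := ℂ)
          (0 : {p : (Σ i : Fin N, Fin (d i)) × (Σ i : Fin N, Fin (d i)) // p.1.1 < p.2.1} → ℂ)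
          = 0 := by
        ext a b
        by_cases h : a.1 < b.1 <;> simp [emb, h]
      rw [hemb0] at hembL
      have hXeq : emb f * blockDiagonal' Aψ = Tψ * emb f := by
        rw [← sub_eq_zero]; exact hembL.symm
      have hzero := upper_ker_zero Aψ Tψ
        (fun i x y => by rw [hTψ, Matrix.map_apply, hdiag i x y]; rfl)
        hlowerSψ
        (fun i j hij => hspec φ i j hij)
        (emb f) (fun a b h => emb_not_lt f h) hXeq
      funext p
      have hp := congrFun (congrFun hzero p.1.1) p.1.2
      rw [emb_lt f p.2] at hp
      exact hp
    have hbij : Function.Bijective (Lmap d Aψ Tψ) :=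
      ⟨hinj, (LinearMap.injective_iff_surjective).mp hinj⟩
    have hdet := (LinearEquiv.ofBijective (Lmap d Aψ Tψ) hbij).isUnit_det bℂ bℂ
    have hcoe : ((LinearEquiv.ofBijective (Lmap d Aψ Tψ) hbij) :
        _ →ₗ[ℂ] _) = Lmap d Aψ Tψ := by
      ext f : 1
      rfl
    rw [hcoe, ← hmap, ← RingHom.mapMatrix_apply, ← RingHom.map_det] at hdet
    exact hdet.ne_zero hφ
  have hLf : Lmap d A T ((LinearEquiv.ofIsUnitDet hM).symm
      (fun p => (T - blockDiagonal' A) p.1.1 p.1.2)) =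
      (fun p => (T - blockDiagonal' A) p.1.1 p.1.2) := by
    have h := (LinearEquiv.ofIsUnitDet hM).apply_symm_apply
      (fun p => (T - blockDiagonal' A) p.1.1 p.1.2)
    rwa [LinearEquiv.ofIsUnitDet_apply] at h
  set X := emb ((LinearEquiv.ofIsUnitDet hM).symm
    (fun p => (T - blockDiagonal' A) p.1.1 p.1.2)) with hXdef
  have hXD : X * blockDiagonal' A - T * X = T - blockDiagonal' A := by
    rw [hXdef, ← emb_L A T hlowerS, hLf]
    ext a b
    by_cases h : a.1 < b.1
    · rw [emb_lt _ h]
    · rw [emb_not_lt _ h]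
      symm
      obtain ⟨i, x⟩ := a; obtain ⟨j, y⟩ := b
      rcases lt_or_eq_of_le (not_lt.mp h) with h' | h'
      · rw [Matrix.sub_apply, hlower i j h' x y, blockDiagonal'_apply_ne _ _ _ (ne_of_gt h'),
          sub_zero]
      · have h'' : j = i := h'
        subst h''
        rw [Matrix.sub_apply, hdiag, blockDiagonal'_apply_eq, sub_self]
  have hnilX : IsNilpotent X := by
    refine ⟨N, ?_⟩
    have hXp : ∀ k : ℕ, ∀ a b : Σ i : Fin N, Fin (d i),
        (b.1 : ℕ) < (a.1 : ℕ) + k → (X ^ k) a b = 0 := by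
      intro k
      induction k with
      | zero =>
        intro a b h
        rw [pow_zero]
        exact Matrix.one_apply_ne (by rintro rfl; omega)
      | succ k ihk =>
        intro a b h
        rw [pow_succ, Matrix.mul_apply]
        apply Finset.sum_eq_zero
        intro c _
        by_cases hc : (c.1 : ℕ) < (a.1 : ℕ) + k
        · rw [ihk a c hc, zero_mul]
        · have hcb : ¬ c.1 < b.1 := by rw [Fin.lt_def]; omega
          rw [hXdef, emb_not_lt _ hcb, mul_zero]
    ext a b
    rw [hXp N a b (by have := b.1.isLt; omega)]
    rfl
  have hu : IsUnit ((1 : Matrix (Σ i : Fin N, Fin (d i)) (Σ i : Fin N, Fin (d i)) 𝒜) + X) :=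
    hnilX.isUnit_one_add
  refine ⟨hu.unit, ?_⟩
  show (hu.unit : Matrix (Σ i : Fin N, Fin (d i)) (Σ i : Fin N, Fin (d i)) 𝒜) * blockDiagonal' A = T * (hu.unit : Matrix (Σ i : Fin N, Fin (d i)) (Σ i : Fin N, Fin (d i)) 𝒜)
  rw [IsUnit.unit_spec]
  have h2 := sub_eq_sub_iff_add_eq_add.mp hXD
  rw [Matrix.add_mul, Matrix.one_mul, Matrix.mul_add, Matrix.mul_one, add_comm]
  exact h2
end

section
/- Roth's theorem over ℂ: Let A ∈ ℂ^{n×n}, B ∈ ℂ^{m×m}, C ∈ ℂ^{n×m}. Then [[A, 0],[0, B]] and [[A, C],[0, B]] are similar in ℂ^{(n+m)×(n+m)} if and only if there exists X ∈ ℂ^{n×m} with AX − XB = C. -/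
open Matrix Module

/-- The linear map sending a block matrix to its bottom two blocks. -/
noncomputable def rothBlk (n m : ℕ) :
    Matrix (Fin n ⊕ Fin m) (Fin n ⊕ Fin m) ℂ →ₗ[ℂ]
      (Matrix (Fin m) (Fin n) ℂ × Matrix (Fin m) (Fin m) ℂ) where
  toFun Z := (Z.toBlocks₂₁, Z.toBlocks₂₂)
  map_add' x y := rfl
  map_smul' c x := rfl

set_option maxHeartbeats 1000000 in
set_option synthInstance.maxHeartbeats 400000 in
theorem roth_removal_rule_complex (n m : ℕ)
    (A : Matrix (Fin n) (Fin n) ℂ) (B : Matrix (Fin m) (Fin m) ℂ)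
    (C : Matrix (Fin n) (Fin m) ℂ) :
    IsConj (Matrix.fromBlocks A 0 0 B) (Matrix.fromBlocks A C 0 B) ↔
      ∃ X : Matrix (Fin n) (Fin m) ℂ, A * X - X * B = C := by
  set M : Matrix (Fin n ⊕ Fin m) (Fin n ⊕ Fin m) ℂ := Matrix.fromBlocks A 0 0 B with hM
  set N : Matrix (Fin n ⊕ Fin m) (Fin n ⊕ Fin m) ℂ := Matrix.fromBlocks A C 0 B with hN
  constructor
  · rintro ⟨u, hu⟩
    set v : Matrix (Fin n ⊕ Fin m) (Fin n ⊕ Fin m) ℂ := ↑u with hv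
    set w : Matrix (Fin n ⊕ Fin m) (Fin n ⊕ Fin m) ℂ := ↑u⁻¹ with hw
    have hvw : v * w = 1 := u.mul_inv
    have hwv : w * v = 1 := u.inv_mul
    have hu' : v * M = N * v := hu
    set L1 := LinearMap.mulRight ℂ M - LinearMap.mulLeft ℂ M with hL1
    set L2 := LinearMap.mulRight ℂ M - LinearMap.mulLeft ℂ N with hL2
    set F := rothBlk n m with hF
    set p := LinearMap.ker L1 with hp
    set q := LinearMap.ker L2 with hq
    have hmemp : ∀ Z, Z ∈ p ↔ Z * M = M * Z := by
      intro Z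
      simp [hp, hL1, LinearMap.mem_ker, sub_eq_zero]
    have hmemq : ∀ Z, Z ∈ q ↔ Z * M = N * Z := by
      intro Z
      simp [hq, hL2, LinearMap.mem_ker, sub_eq_zero]
    -- the linear equivalence given by left multiplication by u
    have hMu : M * w = w * N := by
      calc M * w = w * (v * M) * w := by
            rw [← mul_assoc, hwv, one_mul]
        _ = w * (N * v) * w := by rw [hu']
        _ = w * N := by rw [mul_assoc, mul_assoc, hvw, mul_one]
    let e : Matrix (Fin n ⊕ Fin m) (Fin n ⊕ Fin m) ℂ ≃ₗ[ℂ]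
        Matrix (Fin n ⊕ Fin m) (Fin n ⊕ Fin m) ℂ :=
      LinearEquiv.ofLinear (LinearMap.mulLeft ℂ v) (LinearMap.mulLeft ℂ w)
        (by ext Z; simp [← mul_assoc, hvw])
        (by ext Z; simp [← mul_assoc, hwv])
    have hmap : Submodule.map (e : _ →ₗ[ℂ] _) p = q := by
      ext W
      simp only [Submodule.mem_map]
      constructor
      · rintro ⟨Z, hZ, rfl⟩
        rw [hmemp] at hZ
        rw [hmemq]
        show v * Z * M = N * (v * Z)
        rw [mul_assoc, hZ, ← mul_assoc, hu', mul_assoc]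
      · intro hW
        rw [hmemq] at hW
        refine ⟨w * W, ?_, ?_⟩
        · rw [hmemp]
          calc w * W * M = w * (N * W) := by rw [mul_assoc, hW]
            _ = M * (w * W) := by rw [← mul_assoc, ← hMu, mul_assoc]
        · show v * (w * W) = W
          rw [← mul_assoc, hvw, one_mul]
    have hrank_pq : finrank ℂ p = finrank ℂ q := by
      rw [← hmap]
      exact (Submodule.equivMapOfInjective _ e.injective p).finrank_eq
    -- kernels of F restricted to p and q coincide
    have hker : LinearMap.ker F ⊓ p = LinearMap.ker F ⊓ q := by
      ext Z
      simp only [Submodule.mem_inf, LinearMap.mem_ker, hmemp, hmemq]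
      refine and_congr_right fun hFZ => ?_
      have h21 : Z.toBlocks₂₁ = 0 := congrArg Prod.fst hFZ
      have h22 : Z.toBlocks₂₂ = 0 := congrArg Prod.snd hFZ
      have hNM : N * Z = M * Z := by
        have : (N - M) * Z = 0 := by
          rw [hN, hM]
          have : Matrix.fromBlocks A C 0 B - Matrix.fromBlocks A 0 0 B =
              Matrix.fromBlocks 0 C 0 0 := by
            ext (i | i) (j | j) <;> simp [Matrix.fromBlocks]
          rw [this, ← Matrix.fromBlocks_toBlocks Z, h21, h22,
            Matrix.fromBlocks_multiply]
          simp
        have h2 : N * Z - M * Z = 0 := by rwa [sub_mul] at this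
        exact sub_eq_zero.mp h2
      rw [hNM]
    -- finrank of kernels restricted
    have hkerrank : ∀ r : Submodule ℂ (Matrix (Fin n ⊕ Fin m) (Fin n ⊕ Fin m) ℂ),
        finrank ℂ (LinearMap.ker (F ∘ₗ r.subtype)) = finrank ℂ ↥(LinearMap.ker F ⊓ r) := by
      intro r
      have h1 : LinearMap.ker (F ∘ₗ r.subtype) =
          Submodule.comap r.subtype (LinearMap.ker F ⊓ r) := by
        rw [LinearMap.ker_comp, Submodule.comap_inf]
        have : Submodule.comap r.subtype r = ⊤ := by
          ext x; simp [x.2]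
        rw [this, inf_top_eq]
      rw [h1]
      exact (Submodule.comapSubtypeEquivOfLe (inf_le_right :
        LinearMap.ker F ⊓ r ≤ r)).finrank_eq
    have hrange : ∀ r : Submodule ℂ (Matrix (Fin n ⊕ Fin m) (Fin n ⊕ Fin m) ℂ),
        LinearMap.range (F ∘ₗ r.subtype) = Submodule.map F r := by
      intro r
      rw [LinearMap.range_comp, Submodule.range_subtype]
    -- rank–nullity on both restrictions
    have hrn_p := LinearMap.finrank_range_add_finrank_ker (F ∘ₗ p.subtype)
    have hrn_q := LinearMap.finrank_range_add_finrank_ker (F ∘ₗ q.subtype)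
    rw [hrange p, hkerrank p] at hrn_p
    rw [hrange q, hkerrank q, ← hker] at hrn_q
    have hrank_maps : finrank ℂ (Submodule.map F q) = finrank ℂ (Submodule.map F p) := by
      have h1 : finrank ℂ ↥p = finrank ℂ ↥q := hrank_pq
      omega
    -- map F q ≤ map F p
    have hle : Submodule.map F q ≤ Submodule.map F p := by
      rintro W ⟨Z, hZ, rfl⟩
      rw [SetLike.mem_coe, hmemq] at hZ
      -- extract block equations from  Z * M = N * Z
      obtain ⟨a, b, c, d, rfl⟩ : ∃ a b c d, Z = Matrix.fromBlocks a b c d :=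
        ⟨_, _, _, _, (Matrix.fromBlocks_toBlocks Z).symm⟩
      rw [hM, hN, Matrix.fromBlocks_multiply, Matrix.fromBlocks_multiply] at hZ
      simp only [Matrix.mul_zero, Matrix.zero_mul, add_zero, zero_add] at hZ
      obtain ⟨h11, h12, h21, h22⟩ := Matrix.fromBlocks_inj.mp hZ
      refine ⟨Matrix.fromBlocks 0 0 c d, ?_, ?_⟩
      · rw [SetLike.mem_coe, hmemp, hM, Matrix.fromBlocks_multiply, Matrix.fromBlocks_multiply]
        simp only [Matrix.mul_zero, Matrix.zero_mul, add_zero, zero_add]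
        rw [h21, h22]
      · show (Matrix.toBlocks₂₁ _, Matrix.toBlocks₂₂ _)
            = (Matrix.toBlocks₂₁ _, Matrix.toBlocks₂₂ _)
        simp [Matrix.toBlocks_fromBlocks₂₁, Matrix.toBlocks_fromBlocks₂₂]
    have heq : Submodule.map F q = Submodule.map F p :=
      Submodule.eq_of_le_of_finrank_eq hle hrank_maps
    -- (0, 1) is in the image of p, hence of q
    have h01p : ((0 : Matrix (Fin m) (Fin n) ℂ), (1 : Matrix (Fin m) (Fin m) ℂ)) ∈
        Submodule.map F p := by
      refine ⟨Matrix.fromBlocks 0 0 0 1, ?_, ?_⟩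
      · rw [SetLike.mem_coe, hmemp, hM, Matrix.fromBlocks_multiply, Matrix.fromBlocks_multiply]
        simp
      · show (Matrix.toBlocks₂₁ _, Matrix.toBlocks₂₂ _) = (0, 1)
        simp [Matrix.toBlocks_fromBlocks₂₁, Matrix.toBlocks_fromBlocks₂₂]
    rw [← heq] at h01p
    obtain ⟨Z, hZ, hFZ⟩ := h01p
    rw [SetLike.mem_coe, hmemq] at hZ
    have h21 : Z.toBlocks₂₁ = 0 := congrArg Prod.fst hFZ
    have h22 : Z.toBlocks₂₂ = 1 := congrArg Prod.snd hFZ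
    have hZb : Z = Matrix.fromBlocks Z.toBlocks₁₁ Z.toBlocks₁₂ 0 1 := by
      conv_lhs => rw [← Matrix.fromBlocks_toBlocks Z]
      rw [h21, h22]
    rw [hZb, hM, hN, Matrix.fromBlocks_multiply, Matrix.fromBlocks_multiply] at hZ
    simp only [Matrix.mul_zero, Matrix.zero_mul, add_zero, zero_add,
      Matrix.mul_one, Matrix.one_mul] at hZ
    obtain ⟨h11, h12, h21', h22'⟩ := Matrix.fromBlocks_inj.mp hZ
    -- h12 : Z.toBlocks₁₂ * B = A * Z.toBlocks₁₂ + C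
    refine ⟨-Z.toBlocks₁₂, ?_⟩
    rw [Matrix.mul_neg, Matrix.neg_mul, sub_neg_eq_add, h12]
    abel
  · rintro ⟨X, hX⟩
    refine ⟨⟨Matrix.fromBlocks 1 (-X) 0 1, Matrix.fromBlocks 1 X 0 1, ?_, ?_⟩, ?_⟩
    · simp [Matrix.fromBlocks_multiply, ← Matrix.fromBlocks_one]
    · simp [Matrix.fromBlocks_multiply, ← Matrix.fromBlocks_one]
    · show Matrix.fromBlocks 1 (-X) 0 1 * M = N * Matrix.fromBlocks 1 (-X) 0 1
      rw [hM, hN]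
      simp [Matrix.fromBlocks_multiply, ← hX]
      abel
end
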